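/- (LQ problem: convergence rate of discrete-constraint optimal pairs.) In the LQ problem, for each n let (ūⁿ, X̄ⁿ) be an optimal pair of the cost J under the discrete state constraints X(t_i) ≥ 1 at the grid points t_i = i/n, i = 0,1,…,n, and let (ū, X̄) be the optimal pair under the continuous constraint X(t) ≥ 1 on [0,1], given by ū(t) = −3, X̄(t) = 3 − e^t on [0, ln 2] and ū(t) = −1, X̄(t) = 1 on (ln 2, 1]. Then there is a constant C, independent of n, such that sup_{0≤t≤1} |X̄ⁿ(t) − X̄(t)| ≤ C/n and |J(ūⁿ) − J(ū)| ≤ C/n. -/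

import Mathlib

open MeasureTheory Set Filter Topology

noncomputable section

/-- An admissible control for the LQ problem: measurable with values in `[-3,3]`. -/
def LQAdmissible (u : ℝ → ℝ) : Prop :=
  Measurable u ∧ ∀ t, u t ∈ Set.Icc (-3 : ℝ) 3

/-- `X` solves the LQ state equation `X t = 2 + ∫₀ᵗ (X s + u s) ds` on `[0,1]`. -/
def LQTrajectory (u X : ℝ → ℝ) : Prop :=
  ContinuousOn X (Set.Icc 0 1) ∧
    ∀ s ∈ Set.Icc (0 : ℝ) 1, X s = 2 + ∫ τ in (0 : ℝ)..s, (X τ + u τ)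

/-- The LQ cost `J(u) = ∫₀¹ (Xᵘ t)² dt + (Xᵘ 1)²`. -/
def LQCost (X : ℝ → ℝ) : ℝ :=
  (∫ t in (0 : ℝ)..1, (X t) ^ 2) + (X 1) ^ 2

/-- The optimal control of the LQ problem under the continuous constraint. -/
def LQubar : ℝ → ℝ := fun t => if t ≤ Real.log 2 then (-3 : ℝ) else -1

/-- The optimal trajectory of the LQ problem under the continuous constraint. -/
def LQXbar : ℝ → ℝ := fun t => if t ≤ Real.log 2 then 3 - Real.exp t else 1

/-! ### auxiliary construction -/

def kk (n : ℕ) (t : ℝ) : ℕ := min (⌊(n : ℝ) * t⌋.toNat) (n - 1)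

def cc (n j : ℕ) : ℝ := min 1 (2 * Real.exp (-((j : ℝ) / n)))

def dd (n j : ℕ) : ℝ := 4 * Real.exp (-(((j : ℝ) + 1) / n))

def mm (n : ℕ) (t : ℝ) : ℝ :=
  max (3 - cc n (kk n t) * Real.exp t) (dd n (kk n t) * Real.exp t - 3)

def vv (n : ℕ) (t : ℝ) : ℝ :=
  if Real.exp t * (cc n (kk n t) + dd n (kk n t)) ≤ 6 then -3 else 3

lemma cc_pos (n j : ℕ) : 0 < cc n j := by
  apply lt_min one_pos; positivity

lemma cc_le_one (n j : ℕ) : cc n j ≤ 1 := min_le_left _ _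

lemma cc_le (n j : ℕ) : cc n j ≤ 2 * Real.exp (-((j : ℝ) / n)) := min_le_right _ _

lemma dd_pos (n j : ℕ) : 0 < dd n j := by unfold dd; positivity

lemma dd_le (n : ℕ) (hn : 0 < n) (j : ℕ) : dd n j ≤ 4 * Real.exp (-((j : ℝ) / n)) := by
  unfold dd
  have hn' : (0:ℝ) < n := by exact_mod_cast hn
  have h : -(((j : ℝ) + 1) / n) ≤ -((j : ℝ) / n) := by
    rw [neg_le_neg_iff, div_le_div_iff_of_pos_right hn']
    · linarith
  nlinarith [Real.exp_le_exp.2 h, Real.exp_pos (-(((j : ℝ) + 1) / n))]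

lemma cd_le (n : ℕ) (hn : 0 < n) (j : ℕ) :
    cc n j + dd n j ≤ 6 * Real.exp (-((j : ℝ) / n)) := by
  have := cc_le n j; have := dd_le n hn j; linarith

lemma kk_le (n : ℕ) : kk n t ≤ n - 1 := min_le_right _ _

lemma kk_div_le (n : ℕ) (hn : 0 < n) {t : ℝ} (ht : 0 ≤ t) : (kk n t : ℝ) / n ≤ t := by
  have hn' : (0:ℝ) < n := by exact_mod_cast hn
  rw [div_le_iff₀ hn']
  have h1 : (kk n t : ℝ) ≤ (⌊(n : ℝ) * t⌋.toNat : ℝ) := by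
    exact_mod_cast Nat.cast_le.2 (min_le_left _ _)
  have h2 : ((⌊(n : ℝ) * t⌋.toNat : ℤ) : ℝ) ≤ (n : ℝ) * t := by
    rcases le_or_gt 0 ⌊(n : ℝ) * t⌋ with h | h
    · rw [Int.toNat_of_nonneg h]; exact Int.floor_le _
    · have : ⌊(n : ℝ) * t⌋.toNat = 0 := Int.toNat_of_nonpos h.le
      rw [this]; push_cast; positivity
  have h2' : ((⌊(n : ℝ) * t⌋.toNat : ℕ) : ℝ) ≤ (n : ℝ) * t := by exact_mod_cast h2
  nlinarith [h1.trans h2']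
lemma le_kk_div_add (n : ℕ) (hn : 0 < n) {t : ℝ} (ht : 0 ≤ t) (ht1 : t ≤ 1) :
    t ≤ ((kk n t : ℝ) + 1) / n := by
  have hn' : (0:ℝ) < n := by exact_mod_cast hn
  rw [le_div_iff₀ hn']
  rcases le_or_gt (⌊(n : ℝ) * t⌋.toNat) (n - 1) with h | h
  · have hk : kk n t = ⌊(n : ℝ) * t⌋.toNat := min_eq_left h
    rw [hk]
    have h0 : (0:ℤ) ≤ ⌊(n : ℝ) * t⌋ := Int.floor_nonneg.2 (by positivity)
    have := Int.lt_floor_add_one ((n:ℝ) * t)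
    have : (n:ℝ) * t < (⌊(n : ℝ) * t⌋ : ℝ) + 1 := this
    rw [← Int.toNat_of_nonneg h0] at this
    push_cast at this ⊢
    nlinarith
  · have hk : kk n t = n - 1 := min_eq_right h.le
    rw [hk]
    have : ((n - 1 : ℕ) : ℝ) + 1 = n := by
      have : 1 ≤ n := hn
      push_cast [Nat.cast_sub this]; ring
    rw [this]
    nlinarith

lemma kk_eq_of_mem (n : ℕ) (hn : 0 < n) {j : ℕ} (hj : j ≤ n - 1) {τ : ℝ}
    (h1 : (j : ℝ) / n ≤ τ) (h2 : τ < ((j : ℝ) + 1) / n) : kk n τ = j := by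
  have hn' : (0:ℝ) < n := by exact_mod_cast hn
  have hfl : ⌊(n : ℝ) * τ⌋ = (j : ℤ) := by
    apply Int.floor_eq_iff.2
    constructor
    · push_cast; rw [div_le_iff₀ hn'] at h1; linarith [h1]
    · push_cast; rw [lt_div_iff₀ hn'] at h2; linarith [h2]
  unfold kk
  rw [hfl]
  simp [Int.toNat_natCast, min_eq_left hj]

lemma kk_one (n : ℕ) (hn : 0 < n) : kk n 1 = n - 1 := by
  unfold kk
  have : ((n:ℝ) * 1) = ((n:ℤ) : ℝ) := by push_cast; ring
  rw [this, Int.floor_intCast]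
  simp

lemma measurable_kk (n : ℕ) : Measurable (kk n) := by
  have h1 : Measurable (fun t : ℝ => ⌊(n : ℝ) * t⌋) :=
    Int.measurable_floor.comp (measurable_const_mul _)
  exact (measurable_from_top (f := fun z : ℤ => min z.toNat (n-1))).comp h1

lemma measurable_mm (n : ℕ) : Measurable (mm n) := by
  apply Measurable.max
  · exact (measurable_const.sub (((measurable_from_top (f := cc n)).comp (measurable_kk n)).mul
      Real.continuous_exp.measurable))
  · exact ((((measurable_from_top (f := dd n)).comp (measurable_kk n)).mul
      Real.continuous_exp.measurable).sub measurable_const)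

lemma measurable_vv (n : ℕ) : Measurable (vv n) := by
  apply Measurable.ite ?_ measurable_const measurable_const
  apply measurableSet_le ?_ measurable_const
  exact Real.continuous_exp.measurable.mul
    (((measurable_from_top (f := fun j => cc n j + dd n j)).comp (measurable_kk n)))

lemma vv_mem (n : ℕ) (t : ℝ) : vv n t ∈ Set.Icc (-3:ℝ) 3 := by
  unfold vv; split <;> norm_num

/-- value of `mm` at grid points -/
lemma mm_grid (n : ℕ) (hn : 0 < n) {i : ℕ} (hi : i ≤ n) :
    mm n ((i : ℝ) / n) = max (3 - Real.exp ((i : ℝ) / n)) 1 := by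
  have hn' : (0:ℝ) < n := by exact_mod_cast hn
  have hexp : ∀ a b : ℝ, Real.exp a * Real.exp b = Real.exp (a + b) := by
    intro a b; rw [← Real.exp_add]
  rcases Nat.lt_or_ge i n with hlt | hge
  · -- i ≤ n - 1
    have hj : i ≤ n - 1 := by omega
    have hk : kk n ((i : ℝ) / n) = i := by
      apply kk_eq_of_mem n hn hj le_rfl
      rw [div_lt_div_iff_of_pos_right hn']
      linarith
    unfold mm
    rw [hk]
    have hc : cc n i * Real.exp ((i : ℝ) / n) = min (Real.exp ((i : ℝ) / n)) 2 := by
      unfold cc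
      rw [min_mul_of_nonneg _ _ (Real.exp_nonneg _), one_mul, mul_assoc, hexp]
      norm_num
    have hd : dd n i * Real.exp ((i : ℝ) / n) = 4 * Real.exp (-(1 / (n:ℝ))) := by
      unfold dd
      rw [mul_assoc, hexp]
      ring_nf
    rw [hc, hd]
    have h2 : 4 * Real.exp (-(1 / (n:ℝ))) - 3 ≤ 1 := by
      have := Real.exp_le_one_iff.2 (neg_nonpos.2 (by positivity) : -(1/(n:ℝ)) ≤ 0)
      linarith
    have : (3:ℝ) - min (Real.exp ((i : ℝ) / n)) 2 = max (3 - Real.exp ((i : ℝ) / n)) 1 := by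
      rcases min_cases (Real.exp ((i : ℝ) / n)) 2 with ⟨h, h'⟩ | ⟨h, h'⟩ <;>
        rcases max_cases (3 - Real.exp ((i : ℝ) / n)) 1 with ⟨g, g'⟩ | ⟨g, g'⟩ <;> simp_all <;> linarith
    rw [this]
    exact max_eq_left (h2.trans (le_max_right _ _))
  · -- i = n, t = 1
    have hi' : i = n := le_antisymm hi hge
    rw [hi']
    have ht1 : ((n:ℝ))/n = 1 := div_self hn'.ne'
    rw [ht1]
    have hk := kk_one n hn
    unfold mm
    rw [hk]
    have hcast : ((n - 1 : ℕ) : ℝ) = (n : ℝ) - 1 := by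
      have : 1 ≤ n := hn
      push_cast [Nat.cast_sub this]; ring
    have hd : dd n (n-1) * Real.exp 1 = 4 := by
      unfold dd
      rw [hcast, mul_assoc, hexp]
      have : (((n:ℝ) - 1 + 1) / n) = 1 := by rw [div_eq_one_iff_eq hn'.ne']; ring
      rw [this]
      simp
    have hc1 : cc n (n-1) * Real.exp 1 ≥ 2 := by
      have h1 : (1:ℝ) * Real.exp 1 ≥ 2 := by
        have := Real.add_one_le_exp 1; linarith
      have h2 : (2 * Real.exp (-(((n-1:ℕ) : ℝ) / n))) * Real.exp 1 ≥ 2 := by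
        rw [mul_assoc, hexp]
        have : 0 ≤ -(((n-1:ℕ) : ℝ) / n) + 1 := by
          rw [hcast]
          have : ((n:ℝ) - 1)/n ≤ 1 := by
            rw [div_le_one hn']; linarith
          linarith
        nlinarith [Real.one_le_exp this]
      unfold cc
      rcases min_cases 1 (2 * Real.exp (-(((n-1:ℕ) : ℝ) / n))) with ⟨h, _⟩ | ⟨h, _⟩ <;>
        rw [h] <;> assumption
    have he : (2:ℝ) ≤ Real.exp 1 := by have := Real.add_one_le_exp 1; linarith
    rw [hd]
    have : max (3 - Real.exp 1) 1 = 1 := max_eq_right (by linarith)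
    rw [this]
    have h1 : 3 - cc n (n-1) * Real.exp 1 ≤ 1 := by linarith
    have h4 : (4:ℝ) * Real.exp 1 * Real.exp (-1) - 3 = 1 := by
      rw [mul_assoc, hexp]; norm_num
    rw [max_eq_right]
    · norm_num
    · norm_num; linarith

lemma adm_II {u : ℝ → ℝ} (hu : LQAdmissible u) (a b : ℝ) :
    IntervalIntegrable u volume a b := by
  apply IntegrableOn.intervalIntegrable
  apply Integrable.mono' (g := fun _ => (3:ℝ)) ?_ (hu.1.aestronglyMeasurable.restrict)
  · filter_upwards with t
    rw [Real.norm_eq_abs, abs_le]; exact ⟨(hu.2 t).1, (hu.2 t).2⟩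
  · have : IntegrableOn (fun _ => (3:ℝ)) (Set.uIcc a b) volume := by
      refine integrableOn_const ?_
      rw [← Set.Icc_min_max]
      simp [Real.volume_Icc]
    exact this

lemma traj_II {u X : ℝ → ℝ} (hu : LQAdmissible u) (hX : LQTrajectory u X)
    {a b : ℝ} (hab : Set.uIcc a b ⊆ Set.Icc 0 1) :
    IntervalIntegrable (fun τ => X τ + u τ) volume a b := by
  apply IntervalIntegrable.add ?_ (adm_II hu a b)
  apply IntegrableOn.intervalIntegrable
  exact (hX.1.mono hab).integrableOn_compact (isCompact_uIcc)

lemma traj_sub {u X : ℝ → ℝ} (hu : LQAdmissible u) (hX : LQTrajectory u X)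
    {a s : ℝ} (ha : 0 ≤ a) (has : a ≤ s) (hs : s ≤ 1) :
    X s - X a = ∫ τ in a..s, (X τ + u τ) := by
  have h1 := hX.2 s ⟨ha.trans has, hs⟩
  have h2 := hX.2 a ⟨ha, has.trans hs⟩
  have hadd : (∫ τ in (0:ℝ)..a, (X τ + u τ)) + (∫ τ in a..s, (X τ + u τ))
      = ∫ τ in (0:ℝ)..s, (X τ + u τ) := by
    apply intervalIntegral.integral_add_adjacent_intervals
    · exact traj_II hu hX (by rw [Set.uIcc_of_le ha]; exact Set.Icc_subset_Icc le_rfl (has.trans hs))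
    · exact traj_II hu hX (by rw [Set.uIcc_of_le has]; exact Set.Icc_subset_Icc ha hs)
  rw [h1, h2]
  linarith

lemma exp_cancel (t : ℝ) : Real.exp (-t) * Real.exp t = 1 := by
  rw [← Real.exp_add]; simp

lemma traj_ge {u X : ℝ → ℝ} (hu : LQAdmissible u) (hX : LQTrajectory u X)
    {a t : ℝ} (ha : 0 ≤ a) (hat : a ≤ t) (ht : t ≤ 1) :
    3 + (X a - 3) * Real.exp (t - a) ≤ X t := by
  set Y : ℝ → ℝ := fun s => X s - 3 with hY
  set W : ℝ → ℝ := fun s => Y a + ∫ τ in a..s, Y τ with hW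
  have hYII : ∀ {b c : ℝ}, 0 ≤ b → b ≤ c → c ≤ 1 → IntervalIntegrable Y volume b c := by
    intro b c hb hbc hc
    apply IntervalIntegrable.sub ?_ intervalIntegrable_const
    apply IntegrableOn.intervalIntegrable
    refine (hX.1.mono ?_).integrableOn_compact (isCompact_uIcc)
    rw [Set.uIcc_of_le hbc]; exact Set.Icc_subset_Icc hb hc
  have step1 : ∀ s, a ≤ s → s ≤ 1 → W s ≤ Y s := by
    intro s has hs1
    have hsub := traj_sub hu hX ha has hs1
    have hsplit : (∫ τ in a..s, (X τ + u τ)) = (∫ τ in a..s, X τ) + ∫ τ in a..s, u τ := by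
      apply intervalIntegral.integral_add ?_ (adm_II hu a s)
      apply IntegrableOn.intervalIntegrable
      refine (hX.1.mono ?_).integrableOn_compact (isCompact_uIcc)
      rw [Set.uIcc_of_le has]; exact Set.Icc_subset_Icc ha hs1
    have hmono : (-3 : ℝ) * (s - a) ≤ ∫ τ in a..s, u τ := by
      have := intervalIntegral.integral_mono_on has
        intervalIntegrable_const (adm_II hu a s) (fun x _ => (hu.2 x).1)
      simpa [mul_comm] using this
    have hYint : (∫ τ in a..s, Y τ) = (∫ τ in a..s, X τ) - 3 * (s - a) := by
      rw [hY]
      rw [intervalIntegral.integral_sub ?_ intervalIntegrable_const]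
      · simp [mul_comm]
      · apply IntegrableOn.intervalIntegrable
        refine (hX.1.mono ?_).integrableOn_compact (isCompact_uIcc)
        rw [Set.uIcc_of_le has]; exact Set.Icc_subset_Icc ha hs1
    simp only [hW, hY]
    rw [hYint]
    have : X s - X a = (∫ τ in a..s, X τ) + ∫ τ in a..s, u τ := by rw [hsub, hsplit]
    linarith
  -- monotonicity of s ↦ exp (-s) * W s on [a, t]
  set φ : ℝ → ℝ := fun s => Real.exp (-s) * W s with hφ
  have hWd : ∀ s ∈ Set.Ioo a t, HasDerivAt W (Y s) s := by
    intro s hs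
    have hs01 : s ∈ Set.Ioo (0:ℝ) 1 := ⟨lt_of_le_of_lt ha hs.1, lt_of_lt_of_le hs.2 ht⟩
    have hYcont : ContinuousOn Y (Set.Ioo (0:ℝ) 1) :=
      (hX.1.mono Set.Ioo_subset_Icc_self).sub continuousOn_const
    have h1 : HasDerivAt (fun r => ∫ τ in a..r, Y τ) (Y s) s := by
      apply intervalIntegral.integral_hasDerivAt_right
        (hYII ha hs.1.le (hs.2.le.trans ht))
        (hYcont.stronglyMeasurableAtFilter isOpen_Ioo s hs01)
      exact hYcont.continuousAt (isOpen_Ioo.mem_nhds hs01)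
    exact h1.const_add (Y a)
  have hφd : ∀ s ∈ Set.Ioo a t, HasDerivAt φ (Real.exp (-s) * (Y s - W s)) s := by
    intro s hs
    have hE : HasDerivAt (fun r : ℝ => Real.exp (-r)) (-Real.exp (-s)) s := by
      simpa [Function.comp_def] using (Real.hasDerivAt_exp (-s)).comp s (hasDerivAt_neg s)
    have := hE.mul (hWd s hs)
    exact this.congr_deriv (by ring)
  have hWcont : ContinuousOn W (Set.Icc a t) := by
    apply ContinuousOn.add continuousOn_const
    have := intervalIntegral.continuousOn_primitive_interval
      (f := Y) (a := a) (b := t) (μ := volume) ?_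
    · exact this.mono (by rw [Set.uIcc_of_le hat])
    · rw [Set.uIcc_of_le hat]
      exact ((hX.1.mono (Set.Icc_subset_Icc ha ht)).sub continuousOn_const).integrableOn_compact
        isCompact_Icc
  have hφcont : ContinuousOn φ (Set.Icc a t) :=
    (Real.continuous_exp.comp continuous_neg).continuousOn.mul hWcont
  have hmono : MonotoneOn φ (Set.Icc a t) := by
    apply monotoneOn_of_deriv_nonneg (convex_Icc a t) hφcont
    · intro s hs
      rw [interior_Icc] at hs
      exact (hφd s hs).differentiableAt.differentiableWithinAt
    · intro s hs
      rw [interior_Icc] at hs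
      rw [(hφd s hs).deriv]
      have hWY := step1 s (hs.1.le) (hs.2.le.trans ht)
      have := Real.exp_pos (-s)
      nlinarith
  have hφat : φ a ≤ φ t := hmono ⟨le_rfl, hat⟩ ⟨hat, le_rfl⟩ hat
  have hφa : φ a = Real.exp (-a) * (X a - 3) := by
    simp [hφ, hW, hY]
  have hφt : φ t ≤ Real.exp (-t) * (X t - 3) := by
    have hWY := step1 t hat ht
    have := (Real.exp_pos (-t)).le
    simp only [hφ]
    have : Real.exp (-t) * W t ≤ Real.exp (-t) * Y t :=
      mul_le_mul_of_nonneg_left hWY (Real.exp_pos (-t)).le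
    simpa [hY] using this
  have h' : Real.exp (-a) * (X a - 3) ≤ Real.exp (-t) * (X t - 3) := by
    rw [← hφa]; exact hφat.trans hφt
  have hfin : (X a - 3) * Real.exp (t - a) ≤ X t - 3 := by
    calc (X a - 3) * Real.exp (t - a) = (Real.exp (-a) * (X a - 3)) * Real.exp t := by
          rw [show t - a = t + (-a) by ring, Real.exp_add]; ring
      _ ≤ (Real.exp (-t) * (X t - 3)) * Real.exp t :=
          mul_le_mul_of_nonneg_right h' (Real.exp_pos t).le
      _ = (X t - 3) * (Real.exp (-t) * Real.exp t) := by ring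
      _ = X t - 3 := by rw [exp_cancel, mul_one]
  linarith

lemma traj_le {u X : ℝ → ℝ} (hu : LQAdmissible u) (hX : LQTrajectory u X)
    {a t : ℝ} (ha : 0 ≤ a) (hat : a ≤ t) (ht : t ≤ 1) :
    X t ≤ -3 + (X a + 3) * Real.exp (t - a) := by
  set Z : ℝ → ℝ := fun s => X s + 3 with hZ
  set V : ℝ → ℝ := fun s => Z a + ∫ τ in a..s, Z τ with hV
  have hZII : ∀ {b c : ℝ}, 0 ≤ b → b ≤ c → c ≤ 1 → IntervalIntegrable Z volume b c := by
    intro b c hb hbc hc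
    apply IntervalIntegrable.add ?_ intervalIntegrable_const
    apply IntegrableOn.intervalIntegrable
    refine (hX.1.mono ?_).integrableOn_compact (isCompact_uIcc)
    rw [Set.uIcc_of_le hbc]; exact Set.Icc_subset_Icc hb hc
  have step1 : ∀ s, a ≤ s → s ≤ 1 → Z s ≤ V s := by
    intro s has hs1
    have hsub := traj_sub hu hX ha has hs1
    have hsplit : (∫ τ in a..s, (X τ + u τ)) = (∫ τ in a..s, X τ) + ∫ τ in a..s, u τ := by
      apply intervalIntegral.integral_add ?_ (adm_II hu a s)
      apply IntegrableOn.intervalIntegrable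
      refine (hX.1.mono ?_).integrableOn_compact (isCompact_uIcc)
      rw [Set.uIcc_of_le has]; exact Set.Icc_subset_Icc ha hs1
    have hmono : (∫ τ in a..s, u τ) ≤ 3 * (s - a) := by
      have := intervalIntegral.integral_mono_on has
        (adm_II hu a s) intervalIntegrable_const (fun x _ => (hu.2 x).2)
      simpa [mul_comm] using this
    have hZint : (∫ τ in a..s, Z τ) = (∫ τ in a..s, X τ) + 3 * (s - a) := by
      rw [hZ]
      rw [intervalIntegral.integral_add ?_ intervalIntegrable_const]
      · simp [mul_comm]
      · apply IntegrableOn.intervalIntegrable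
        refine (hX.1.mono ?_).integrableOn_compact (isCompact_uIcc)
        rw [Set.uIcc_of_le has]; exact Set.Icc_subset_Icc ha hs1
    simp only [hV, hZ]
    rw [hZint]
    have : X s - X a = (∫ τ in a..s, X τ) + ∫ τ in a..s, u τ := by rw [hsub, hsplit]
    linarith
  set ψ : ℝ → ℝ := fun s => Real.exp (-s) * V s with hψ
  have hVd : ∀ s ∈ Set.Ioo a t, HasDerivAt V (Z s) s := by
    intro s hs
    have hs01 : s ∈ Set.Ioo (0:ℝ) 1 := ⟨lt_of_le_of_lt ha hs.1, lt_of_lt_of_le hs.2 ht⟩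
    have hZcont : ContinuousOn Z (Set.Ioo (0:ℝ) 1) :=
      (hX.1.mono Set.Ioo_subset_Icc_self).add continuousOn_const
    have h1 : HasDerivAt (fun r => ∫ τ in a..r, Z τ) (Z s) s := by
      apply intervalIntegral.integral_hasDerivAt_right
        (hZII ha hs.1.le (hs.2.le.trans ht))
        (hZcont.stronglyMeasurableAtFilter isOpen_Ioo s hs01)
      exact hZcont.continuousAt (isOpen_Ioo.mem_nhds hs01)
    exact h1.const_add (Z a)
  have hψd : ∀ s ∈ Set.Ioo a t, HasDerivAt ψ (Real.exp (-s) * (Z s - V s)) s := by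
    intro s hs
    have hE : HasDerivAt (fun r : ℝ => Real.exp (-r)) (-Real.exp (-s)) s := by
      simpa [Function.comp_def] using (Real.hasDerivAt_exp (-s)).comp s (hasDerivAt_neg s)
    have := hE.mul (hVd s hs)
    exact this.congr_deriv (by ring)
  have hVcont : ContinuousOn V (Set.Icc a t) := by
    apply ContinuousOn.add continuousOn_const
    have := intervalIntegral.continuousOn_primitive_interval
      (f := Z) (a := a) (b := t) (μ := volume) ?_
    · exact this.mono (by rw [Set.uIcc_of_le hat])
    · rw [Set.uIcc_of_le hat]
      exact ((hX.1.mono (Set.Icc_subset_Icc ha ht)).add continuousOn_const).integrableOn_compact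
        isCompact_Icc
  have hψcont : ContinuousOn ψ (Set.Icc a t) :=
    (Real.continuous_exp.comp continuous_neg).continuousOn.mul hVcont
  have hmono : AntitoneOn ψ (Set.Icc a t) := by
    apply antitoneOn_of_deriv_nonpos (convex_Icc a t) hψcont
    · intro s hs
      rw [interior_Icc] at hs
      exact (hψd s hs).differentiableAt.differentiableWithinAt
    · intro s hs
      rw [interior_Icc] at hs
      rw [(hψd s hs).deriv]
      have hZV := step1 s (hs.1.le) (hs.2.le.trans ht)
      have := Real.exp_pos (-s)
      nlinarith
  have hψat : ψ t ≤ ψ a := hmono ⟨le_rfl, hat⟩ ⟨hat, le_rfl⟩ hat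
  have hψa : ψ a = Real.exp (-a) * (X a + 3) := by
    simp [hψ, hV, hZ]
  have hψt : Real.exp (-t) * (X t + 3) ≤ ψ t := by
    have hZV := step1 t hat ht
    simp only [hψ]
    have : Real.exp (-t) * Z t ≤ Real.exp (-t) * V t :=
      mul_le_mul_of_nonneg_left hZV (Real.exp_pos (-t)).le
    simpa [hZ] using this
  have h' : Real.exp (-t) * (X t + 3) ≤ Real.exp (-a) * (X a + 3) := by
    rw [← hψa]; exact hψt.trans hψat
  have hfin : X t + 3 ≤ (X a + 3) * Real.exp (t - a) := by
    calc X t + 3 = (Real.exp (-t) * (X t + 3)) * Real.exp t := by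
          rw [show Real.exp (-t) * (X t + 3) * Real.exp t
              = (X t + 3) * (Real.exp (-t) * Real.exp t) by ring, exp_cancel, mul_one]
      _ ≤ (Real.exp (-a) * (X a + 3)) * Real.exp t :=
          mul_le_mul_of_nonneg_right h' (Real.exp_pos t).le
      _ = (X a + 3) * Real.exp (t - a) := by
          rw [show t - a = t + (-a) by ring, Real.exp_add]; ring
  linarith

lemma traj_zero {u X : ℝ → ℝ} (hX : LQTrajectory u X) : X 0 = 2 := by
  have := hX.2 0 ⟨le_rfl, zero_le_one⟩
  simpa using this

lemma traj_ge_exp {u X : ℝ → ℝ} (hu : LQAdmissible u) (hX : LQTrajectory u X)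
    {t : ℝ} (ht0 : 0 ≤ t) (ht : t ≤ 1) : 3 - Real.exp t ≤ X t := by
  have := traj_ge hu hX le_rfl ht0 ht
  rw [traj_zero hX] at this
  simp only [sub_zero] at this
  linarith

lemma traj_ge_two {u X : ℝ → ℝ} (hu : LQAdmissible u) (hX : LQTrajectory u X)
    {a t : ℝ} (ha : 0 ≤ a) (hat : a ≤ t) (ht : t ≤ 1) (hXa : 1 ≤ X a) :
    3 - 2 * Real.exp (t - a) ≤ X t := by
  have h := traj_ge hu hX ha hat ht
  have he := (Real.exp_pos (t - a)).le
  nlinarith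

lemma traj_ge_back {u X : ℝ → ℝ} (hu : LQAdmissible u) (hX : LQTrajectory u X)
    {t b : ℝ} (ht : 0 ≤ t) (htb : t ≤ b) (hb : b ≤ 1) (hXb : 1 ≤ X b) :
    4 * Real.exp (t - b) - 3 ≤ X t := by
  have h := traj_le hu hX ht htb hb
  have h4 : 4 ≤ (X t + 3) * Real.exp (b - t) := by linarith
  have h5 := mul_le_mul_of_nonneg_right h4 (Real.exp_pos (t - b)).le
  have hc : Real.exp (b - t) * Real.exp (t - b) = 1 := by
    rw [← Real.exp_add]; simp
  have : (X t + 3) * Real.exp (b - t) * Real.exp (t - b) = X t + 3 := by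
    rw [mul_assoc, hc, mul_one]
  linarith

lemma exp_merge (a b : ℝ) : Real.exp a * Real.exp b = Real.exp (a + b) :=
  (Real.exp_add a b).symm

lemma sigma_cond (n : ℕ) (hn : 0 < n) (j : ℕ) :
    Real.exp ((j:ℝ)/n) * (cc n j + dd n j) ≤ 6 := by
  have h := cd_le n hn j
  have hp := (Real.exp_pos ((j:ℝ)/n)).le
  have hc : Real.exp ((j:ℝ)/n) * Real.exp (-((j:ℝ)/n)) = 1 := by
    rw [exp_merge]; simp
  nlinarith [mul_le_mul_of_nonneg_left h hp]

lemma mm_le_traj {n : ℕ} (hn : 0 < n) {u X : ℝ → ℝ} (hu : LQAdmissible u)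
    (hX : LQTrajectory u X) (hcon : ∀ i ≤ n, 1 ≤ X ((i:ℝ)/n))
    {t : ℝ} (ht : t ∈ Set.Icc (0:ℝ) 1) : mm n t ≤ X t := by
  obtain ⟨ht0, ht1⟩ := ht
  set k := kk n t with hkdef
  have hn' : (0:ℝ) < n := by exact_mod_cast hn
  have hk1 : (k:ℝ)/n ≤ t := kk_div_le n hn ht0
  have hk2 : t ≤ ((k:ℝ)+1)/n := by
    have := le_kk_div_add n hn ht0 ht1
    exact_mod_cast this
  have hk3 : k + 1 ≤ n := by
    have := kk_le (t := t) n; omega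
  have hk4 : ((k:ℝ)+1)/n ≤ 1 := by
    rw [div_le_one hn']
    exact_mod_cast Nat.cast_le.2 hk3
  have hk0 : (0:ℝ) ≤ (k:ℝ)/n := by positivity
  apply max_le
  · -- piece 1
    have hsplit : cc n k * Real.exp t
        = min (Real.exp t) (2 * Real.exp (-((k:ℝ)/n)) * Real.exp t) := by
      unfold cc
      rw [min_mul_of_nonneg _ _ (Real.exp_nonneg t), one_mul]
    rw [hsplit]
    rcases min_cases (Real.exp t) (2 * Real.exp (-((k:ℝ)/n)) * Real.exp t) with ⟨h, _⟩ | ⟨h, _⟩ <;>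
      rw [h]
    · linarith [traj_ge_exp hu hX ht0 ht1]
    · have h2 : 2 * Real.exp (-((k:ℝ)/n)) * Real.exp t = 2 * Real.exp (t - (k:ℝ)/n) := by
        rw [mul_assoc, exp_merge]; ring_nf
      rw [h2]
      linarith [traj_ge_two hu hX hk0 hk1 ht1 (hcon k (by omega))]
  · -- piece 2
    have h2 : dd n k * Real.exp t = 4 * Real.exp (t - ((k:ℝ)+1)/n) := by
      unfold dd
      rw [mul_assoc, exp_merge]; ring_nf
    rw [h2]
    have := traj_ge_back hu hX ht0 hk2 hk4 ?_
    · linarith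
    · have : (((k+1 : ℕ)):ℝ) = (k:ℝ)+1 := by push_cast; ring
      have := hcon (k+1) hk3
      rwa [show (((k+1 : ℕ)):ℝ) = (k:ℝ)+1 by push_cast; ring] at this

lemma mm_lb (n : ℕ) (t : ℝ) : 3 - Real.exp t ≤ mm n t := by
  have h1 : cc n (kk n t) * Real.exp t ≤ Real.exp t := by
    have := cc_le_one n (kk n t)
    nlinarith [Real.exp_pos t, cc_pos n (kk n t)]
  calc 3 - Real.exp t ≤ 3 - cc n (kk n t) * Real.exp t := by linarith
    _ ≤ mm n t := le_max_left _ _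

lemma mm_pos {n : ℕ} {t : ℝ} (ht1 : t ≤ 1) : 0 < mm n t := by
  have h := mm_lb n t
  have : Real.exp t ≤ Real.exp 1 := Real.exp_le_exp.2 ht1
  have := Real.exp_one_lt_d9
  linarith

lemma mm_le_three {n : ℕ} (hn : 0 < n) {t : ℝ} (ht : t ∈ Set.Icc (0:ℝ) 1) : mm n t ≤ 3 := by
  apply max_le
  · nlinarith [Real.exp_pos t, cc_pos n (kk n t)]
  · have h2 : dd n (kk n t) * Real.exp t = 4 * Real.exp (t - ((kk n t : ℝ)+1)/n) := by
      unfold dd; rw [mul_assoc, exp_merge]; ring_nf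
    have hk2 : t ≤ ((kk n t:ℝ)+1)/n := by
      have := le_kk_div_add n hn ht.1 ht.2; exact_mod_cast this
    have : Real.exp (t - ((kk n t : ℝ)+1)/n) ≤ 1 := Real.exp_le_one_iff.2 (by linarith)
    nlinarith

lemma mmvv_II {n : ℕ} (hn : 0 < n) {p q : ℝ} (hp : 0 ≤ p) (hpq : p ≤ q) (hq : q ≤ 1) :
    IntervalIntegrable (fun τ => mm n τ + vv n τ) volume p q := by
  apply IntegrableOn.intervalIntegrable
  apply Integrable.mono' (g := fun _ => (6:ℝ))
  · have : IntegrableOn (fun _ => (6:ℝ)) (Set.uIcc p q) volume := by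
      refine integrableOn_const ?_
      rw [← Set.Icc_min_max]; simp [Real.volume_Icc]
    exact this
  · exact ((measurable_mm n).add (measurable_vv n)).aestronglyMeasurable.restrict
  · rw [Set.uIcc_of_le hpq]
    refine (MeasureTheory.ae_restrict_iff' measurableSet_Icc).2 ?_
    filter_upwards with τ hτ
    have hτ' : τ ∈ Set.Icc (0:ℝ) 1 := ⟨hp.trans hτ.1, hτ.2.trans hq⟩
    have h1 := mm_pos (n := n) hτ'.2
    have h2 := mm_le_three hn hτ'
    have h3 := vv_mem n τ
    rw [Real.norm_eq_abs, abs_le]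
    constructor <;> [linarith [h3.1]; linarith [h3.2]]

lemma mm_eq_on {n : ℕ} (hn : 0 < n) {j : ℕ} (hj : j < n) {τ : ℝ}
    (h1 : (j:ℝ)/n ≤ τ) (h2 : τ ≤ ((j:ℝ)+1)/n) :
    mm n τ = max (3 - cc n j * Real.exp τ) (dd n j * Real.exp τ - 3) := by
  rcases lt_or_eq_of_le h2 with h2' | h2'
  · unfold mm
    rw [kk_eq_of_mem n hn (by omega) h1 h2']
  · -- τ is the right endpoint
    have hcast : ((j+1 : ℕ):ℝ) = (j:ℝ)+1 := by push_cast; ring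
    have hτ : τ = ((j+1:ℕ):ℝ)/n := by rw [hcast, h2']
    have hgrid := mm_grid n hn (i := j+1) (by omega)
    rw [hτ, hgrid]
    -- compute RHS
    have hn' : (0:ℝ) < n := by exact_mod_cast hn
    have hc : cc n j * Real.exp (((j+1:ℕ):ℝ)/n)
        = min (Real.exp (((j+1:ℕ):ℝ)/n)) (2 * Real.exp ((1:ℝ)/n)) := by
      unfold cc
      rw [min_mul_of_nonneg _ _ (Real.exp_nonneg _), one_mul, mul_assoc, exp_merge]
      have hexp_eq : -((j:ℝ)/n) + ((j+1:ℕ):ℝ)/n = (1:ℝ)/n := by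
        rw [hcast]; field_simp; ring
      rw [hexp_eq]
    have hd : dd n j * Real.exp (((j+1:ℕ):ℝ)/n) = 4 := by
      unfold dd
      rw [mul_assoc, exp_merge, hcast]
      have : -(((j:ℝ)+1)/n) + ((j:ℝ)+1)/n = 0 := by ring
      rw [this, Real.exp_zero, mul_one]
    rw [hc, hd]
    have hle : (3:ℝ) - 2 * Real.exp ((1:ℝ)/n) ≤ 1 := by
      nlinarith [Real.one_le_exp (by positivity : (0:ℝ) ≤ (1:ℝ)/n)]
    have hmin : (3:ℝ) - min (Real.exp (((j+1:ℕ):ℝ)/n)) (2 * Real.exp ((1:ℝ)/n))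
        = max (3 - Real.exp (((j+1:ℕ):ℝ)/n)) (3 - 2 * Real.exp ((1:ℝ)/n)) := by
      rcases min_cases (Real.exp (((j+1:ℕ):ℝ)/n)) (2 * Real.exp ((1:ℝ)/n)) with ⟨h, h'⟩ | ⟨h, h'⟩ <;>
        rcases max_cases (3 - Real.exp (((j+1:ℕ):ℝ)/n)) (3 - 2 * Real.exp ((1:ℝ)/n)) with ⟨g, g'⟩ | ⟨g, g'⟩ <;>
        simp_all <;> linarith
    have h43 : (4:ℝ) - 3 = 1 := by norm_num
    rw [hmin, h43, max_assoc, max_eq_right hle]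

lemma vv_eq_neg {n : ℕ} (hn : 0 < n) {j : ℕ} (hj : j < n) {τ : ℝ}
    (h1 : (j:ℝ)/n ≤ τ) (h2 : τ ≤ ((j:ℝ)+1)/n)
    (hσ : Real.exp τ * (cc n j + dd n j) ≤ 6) : vv n τ = -3 := by
  rcases lt_or_eq_of_le h2 with h2' | h2'
  · unfold vv
    rw [kk_eq_of_mem n hn (by omega) h1 h2', if_pos hσ]
  · rcases Nat.lt_or_ge (j+1) n with hlt | hge
    · -- kk = j+1, use sigma_cond
      have hcast : ((j+1 : ℕ):ℝ) = (j:ℝ)+1 := by push_cast; ring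
      have hk : kk n τ = j + 1 := by
        apply kk_eq_of_mem n hn (by omega)
        · rw [hcast, h2']
        · have hn' : (0:ℝ) < n := by exact_mod_cast hn
          rw [hcast, h2', div_lt_div_iff_of_pos_right hn']
          linarith
      unfold vv
      rw [hk, if_pos]
      have := sigma_cond n hn (j+1)
      rwa [show ((j+1 : ℕ):ℝ) = (j:ℝ)+1 by push_cast; ring, ← h2'] at this
    · -- j + 1 = n, τ = 1, kk n 1 = n - 1 = j
      have hjn : j + 1 = n := by omega
      have hτ1 : τ = 1 := by
        rw [h2', show (j:ℝ)+1 = ((n:ℕ):ℝ) by rw [← hjn]; push_cast; ring]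
        field_simp
      have hk : kk n τ = j := by rw [hτ1, kk_one n hn]; omega
      unfold vv
      rw [hk, if_pos hσ]

lemma mm_step {n : ℕ} (hn : 0 < n) {j : ℕ} (hj : j < n) {s : ℝ}
    (h1 : (j:ℝ)/n ≤ s) (h2 : s ≤ ((j:ℝ)+1)/n) :
    mm n s = mm n ((j:ℝ)/n) + ∫ τ in ((j:ℝ)/n)..s, (mm n τ + vv n τ) := by
  have hn' : (0:ℝ) < n := by exact_mod_cast hn
  set a : ℝ := (j:ℝ)/n with ha
  set b : ℝ := ((j:ℝ)+1)/n with hb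
  set c : ℝ := cc n j with hc
  set d : ℝ := dd n j with hd
  have hcpos : 0 < c := cc_pos n j
  have hdpos : 0 < d := dd_pos n j
  have hcd : 0 < c + d := by linarith
  have ha0 : 0 ≤ a := by positivity
  have hb1 : b ≤ 1 := by
    rw [hb, div_le_one hn']
    have : (j:ℝ) + 1 ≤ (n:ℝ) := by exact_mod_cast Nat.succ_le_of_lt hj
    linarith
  set σ : ℝ := Real.log (6 / (c + d)) with hσdef
  have hexpσ : Real.exp σ = 6 / (c + d) := Real.exp_log (by positivity)
  have hσcond : ∀ τ : ℝ, τ ≤ σ ↔ Real.exp τ * (c + d) ≤ 6 := by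
    intro τ
    rw [hσdef, Real.le_log_iff_exp_le (by positivity)]
    rw [le_div_iff₀ hcd]
  have hσa : a ≤ σ := (hσcond a).2 (sigma_cond n hn j)
  -- value of mm at points of [a, b] below σ
  have hmm_lo : ∀ τ : ℝ, a ≤ τ → τ ≤ b → τ ≤ σ → mm n τ = 3 - c * Real.exp τ := by
    intro τ hτ1 hτ2 hτσ
    rw [mm_eq_on hn hj hτ1 hτ2]
    apply max_eq_left
    have := (hσcond τ).1 hτσ
    nlinarith [Real.exp_pos τ]
  have hmm_hi : ∀ τ : ℝ, a ≤ τ → τ ≤ b → σ ≤ τ → mm n τ = d * Real.exp τ - 3 := by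
    intro τ hτ1 hτ2 hστ
    rw [mm_eq_on hn hj hτ1 hτ2]
    apply max_eq_right
    have h6 : 6 ≤ Real.exp τ * (c + d) := by
      have := Real.exp_le_exp.2 hστ
      rw [hexpσ] at this
      rw [div_le_iff₀ hcd] at this
      linarith
    nlinarith [Real.exp_pos τ]
  -- integral over an initial piece [a, s'] with s' ≤ σ
  have key : ∀ s' : ℝ, a ≤ s' → s' ≤ b → s' ≤ σ →
      (∫ τ in a..s', (mm n τ + vv n τ)) = -(c * (Real.exp s' - Real.exp a)) := by
    intro s' hs1 hs2 hs3
    have hcongr : ∀ τ ∈ Set.uIcc a s', mm n τ + vv n τ = -(c * Real.exp τ) := by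
      intro τ hτ
      rw [Set.uIcc_of_le hs1] at hτ
      have hτ1 : a ≤ τ := hτ.1
      have hτ2 : τ ≤ b := hτ.2.trans hs2
      have hτσ : τ ≤ σ := hτ.2.trans hs3
      rw [hmm_lo τ hτ1 hτ2 hτσ, vv_eq_neg hn hj hτ1 hτ2 ((hσcond τ).1 hτσ)]
      ring
    rw [intervalIntegral.integral_congr hcongr]
    rw [intervalIntegral.integral_neg, intervalIntegral.integral_const_mul,
      integral_exp]
  rcases le_or_gt s σ with hsσ | hσs
  · -- entire interval below the switching time
    rw [key s h1 h2 hsσ, hmm_lo s h1 h2 hsσ, hmm_lo a le_rfl (h1.trans h2) hσa]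
    ring
  · -- switch at σ
    have hσb : σ ≤ b := le_of_lt (lt_of_lt_of_le hσs h2)
    have hsplit : (∫ τ in a..σ, (mm n τ + vv n τ)) + (∫ τ in σ..s, (mm n τ + vv n τ))
        = ∫ τ in a..s, (mm n τ + vv n τ) := by
      apply intervalIntegral.integral_add_adjacent_intervals
      · exact mmvv_II hn ha0 hσa (hσb.trans hb1)
      · exact mmvv_II hn (ha0.trans hσa) hσs.le (h2.trans hb1)
    have hI2 : (∫ τ in σ..s, (mm n τ + vv n τ)) = d * (Real.exp s - Real.exp σ) := by
      have hbne : ∀ᵐ (τ : ℝ), τ ≠ b := by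
        rw [MeasureTheory.ae_iff]
        have : {τ : ℝ | ¬ τ ≠ b} = {b} := by ext x; simp
        rw [this]
        exact measure_singleton b
      have hcongr : (∫ τ in σ..s, (mm n τ + vv n τ)) = ∫ τ in σ..s, d * Real.exp τ := by
        apply intervalIntegral.integral_congr_ae
        filter_upwards [hbne] with τ hτb hτmem
        rw [Set.uIoc_of_le hσs.le] at hτmem
        have hτ1 : a ≤ τ := hσa.trans hτmem.1.le
        have hτ2 : τ ≤ b := hτmem.2.trans h2
        have hτ2' : τ < b := lt_of_le_of_ne hτ2 hτb
        have hστ : σ ≤ τ := hτmem.1.le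
        have hvv : vv n τ = 3 := by
          unfold vv
          rw [kk_eq_of_mem n hn (by omega) hτ1 hτ2', if_neg]
          rw [← hc, ← hd]
          intro hcon
          have := (hσcond τ).2 hcon
          exact absurd hτmem.1 (not_lt.2 this)
        rw [hmm_hi τ hτ1 hτ2 hστ, hvv]
        ring
      rw [hcongr, intervalIntegral.integral_const_mul, integral_exp]
    have hI1 := key σ hσa hσb le_rfl
    have hσ6 : (c + d) * Real.exp σ = 6 := by
      rw [hexpσ]
      field_simp
    rw [← hsplit, hI1, hI2, hmm_hi s h1 h2 hσs.le, hmm_lo a le_rfl (h1.trans h2) hσa]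
    nlinarith [hσ6]

lemma mm_zero {n : ℕ} (hn : 0 < n) : mm n 0 = 2 := by
  have h := mm_grid n hn (i := 0) (Nat.zero_le n)
  simp only [Nat.cast_zero, zero_div] at h
  rw [h, Real.exp_zero]
  norm_num

lemma mm_grid_eq {n : ℕ} (hn : 0 < n) :
    ∀ i, i ≤ n → mm n ((i:ℝ)/n) = 2 + ∫ τ in (0:ℝ)..((i:ℝ)/n), (mm n τ + vv n τ) := by
  have hn' : (0:ℝ) < n := by exact_mod_cast hn
  intro i
  induction i with
  | zero =>
    intro _
    simp [mm_zero hn]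
  | succ i ih =>
    intro hi
    have hi' : i ≤ n := by omega
    have hii : i < n := by omega
    have hcast : ((i+1 : ℕ):ℝ) = (i:ℝ)+1 := by push_cast; ring
    have hstep := mm_step hn hii (s := ((i:ℝ)+1)/n)
      (by rw [div_le_div_iff_of_pos_right hn']; linarith) le_rfl
    have hadj : (∫ τ in (0:ℝ)..((i:ℝ)/n), (mm n τ + vv n τ))
        + (∫ τ in ((i:ℝ)/n)..(((i:ℝ)+1)/n), (mm n τ + vv n τ))
        = ∫ τ in (0:ℝ)..(((i:ℝ)+1)/n), (mm n τ + vv n τ) := by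
      apply intervalIntegral.integral_add_adjacent_intervals
      · apply mmvv_II hn le_rfl (by positivity)
        rw [div_le_one hn']
        exact_mod_cast Nat.cast_le.2 hi'
      · apply mmvv_II hn (by positivity)
          (by rw [div_le_div_iff_of_pos_right hn']; linarith)
        rw [div_le_one hn']
        have : (i:ℝ) + 1 ≤ (n:ℝ) := by exact_mod_cast Nat.succ_le_of_lt hii
        linarith
    rw [hcast, hstep, ih hi', ← hadj]
    ring

lemma mm_inteq {n : ℕ} (hn : 0 < n) :
    ∀ s ∈ Set.Icc (0:ℝ) 1, mm n s = 2 + ∫ τ in (0:ℝ)..s, (mm n τ + vv n τ) := by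
  intro s hs
  have hn' : (0:ℝ) < n := by exact_mod_cast hn
  set j := kk n s with hj
  have hj1 : (j:ℝ)/n ≤ s := kk_div_le n hn hs.1
  have hj2 : s ≤ ((j:ℝ)+1)/n := by
    have := le_kk_div_add n hn hs.1 hs.2; exact_mod_cast this
  have hjn : j < n := by have := kk_le (t := s) n; omega
  have hstep := mm_step hn hjn hj1 hj2
  have hgrid := mm_grid_eq hn j (by omega)
  have hadj : (∫ τ in (0:ℝ)..((j:ℝ)/n), (mm n τ + vv n τ))
      + (∫ τ in ((j:ℝ)/n)..s, (mm n τ + vv n τ))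
      = ∫ τ in (0:ℝ)..s, (mm n τ + vv n τ) := by
    apply intervalIntegral.integral_add_adjacent_intervals
    · exact mmvv_II hn le_rfl (by positivity) ((hj1.trans hs.2))
    · exact mmvv_II hn (by positivity) hj1 hs.2
  rw [hstep, hgrid, ← hadj]
  ring

lemma mm_traj {n : ℕ} (hn : 0 < n) : LQTrajectory (vv n) (mm n) := by
  constructor
  · -- continuity
    have hint : IntegrableOn (fun τ => mm n τ + vv n τ) (Set.uIcc (0:ℝ) 1) volume := by
      have := mmvv_II hn (le_refl (0:ℝ)) zero_le_one le_rfl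
      rw [intervalIntegrable_iff_integrableOn_Icc_of_le zero_le_one] at this
      rwa [Set.uIcc_of_le zero_le_one]
    have hcont := intervalIntegral.continuousOn_primitive_interval (a := (0:ℝ)) (b := 1)
      (μ := volume) hint
    rw [Set.uIcc_of_le zero_le_one] at hcont
    exact (continuousOn_const.add hcont).congr (fun s hs => (mm_inteq hn s hs))
  · exact mm_inteq hn

lemma mm_adm (n : ℕ) : LQAdmissible (vv n) := ⟨measurable_vv n, vv_mem n⟩

lemma mm_con {n : ℕ} (hn : 0 < n) : ∀ i, i ≤ n → 1 ≤ mm n ((i:ℝ)/n) := by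
  intro i hi
  rw [mm_grid n hn hi]
  exact le_max_right _ _

lemma Xbar_mem {t : ℝ} (ht : t ∈ Set.Icc (0:ℝ) 1) : 1 ≤ LQXbar t ∧ LQXbar t ≤ 2 := by
  unfold LQXbar
  split_ifs with h
  · have h1 : Real.exp t ≤ 2 := by
      calc Real.exp t ≤ Real.exp (Real.log 2) := Real.exp_le_exp.2 h
        _ = 2 := Real.exp_log two_pos
    have h2 : 1 ≤ Real.exp t := Real.one_le_exp ht.1
    constructor <;> linarith
  · norm_num

lemma mm_le_Xbar {n : ℕ} (hn : 0 < n) {t : ℝ} (ht : t ∈ Set.Icc (0:ℝ) 1) :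
    mm n t ≤ LQXbar t := by
  have hn' : (0:ℝ) < n := by exact_mod_cast hn
  set k := kk n t with hk
  have hk1 : (k:ℝ)/n ≤ t := kk_div_le n hn ht.1
  have hk2 : t ≤ ((k:ℝ)+1)/n := by
    have := le_kk_div_add n hn ht.1 ht.2; exact_mod_cast this
  apply max_le
  · -- piece 1
    by_cases hL : t ≤ Real.log 2
    · have hcc : cc n k = 1 := by
        apply min_eq_left
        have h1 : Real.exp (-((k:ℝ)/n)) ≥ Real.exp (-Real.log 2) := by
          apply Real.exp_le_exp.2
          have : (k:ℝ)/n ≤ Real.log 2 := hk1.trans hL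
          linarith
        have h2 : Real.exp (-Real.log 2) = 1/2 := by
          rw [Real.exp_neg, Real.exp_log two_pos]; norm_num
        rw [h2] at h1
        linarith
      rw [hcc, one_mul]
      unfold LQXbar
      rw [if_pos hL]
    · unfold LQXbar
      rw [if_neg hL]
      push_neg at hL
      have h2 : (2:ℝ) < Real.exp t := by
        calc (2:ℝ) = Real.exp (Real.log 2) := (Real.exp_log two_pos).symm
          _ < Real.exp t := Real.exp_lt_exp.2 hL
      have hcc2 : 2 ≤ cc n k * Real.exp t := by
        have hsplit : cc n k * Real.exp t
            = min (Real.exp t) (2 * Real.exp (-((k:ℝ)/n)) * Real.exp t) := by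
          unfold cc
          rw [min_mul_of_nonneg _ _ (Real.exp_nonneg t), one_mul]
        rw [hsplit]
        apply le_min h2.le
        rw [mul_assoc, exp_merge]
        have : (0:ℝ) ≤ -((k:ℝ)/n) + t := by linarith
        nlinarith [Real.one_le_exp this]
      linarith
  · -- piece 2 is at most 1
    have h1 : 1 ≤ LQXbar t := (Xbar_mem ht).1
    have h2 : dd n k * Real.exp t = 4 * Real.exp (t - ((k:ℝ)+1)/n) := by
      unfold dd; rw [mul_assoc, exp_merge]; ring_nf
    have h3 : Real.exp (t - ((k:ℝ)+1)/n) ≤ 1 := Real.exp_le_one_iff.2 (by linarith)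
    nlinarith

lemma exp_inv_le {n : ℕ} (hn : 0 < n) : Real.exp (1/(n:ℝ)) ≤ 1 + 2/n := by
  have hn' : (0:ℝ) < n := by exact_mod_cast hn
  rcases Nat.lt_or_ge n 2 with h2 | h2
  · have : n = 1 := by omega
    subst this
    simp only [Nat.cast_one]
    norm_num
    have := Real.exp_one_lt_d9
    linarith
  · set x : ℝ := 1/(n:ℝ) with hx
    have hx0 : 0 < x := by positivity
    have hx2 : x ≤ 1/2 := by
      rw [hx, div_le_div_iff₀ hn' two_pos]
      have : (2:ℝ) ≤ n := by exact_mod_cast h2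
      linarith
    have h1 : 1 - x ≤ Real.exp (-x) := by
      have := Real.add_one_le_exp (-x); linarith
    have hprod : Real.exp x * Real.exp (-x) = 1 := by rw [exp_merge]; simp
    have h3 : Real.exp x * (1 - x) ≤ 1 := by
      nlinarith [Real.exp_pos x]
    have : Real.exp x ≤ 1 + 2 * x := by nlinarith [Real.exp_pos x]
    rw [hx] at this
    calc Real.exp (1/(n:ℝ)) ≤ 1 + 2 * (1/(n:ℝ)) := this
      _ = 1 + 2/n := by ring

lemma Xbar_sub_mm {n : ℕ} (hn : 0 < n) {t : ℝ} (ht : t ∈ Set.Icc (0:ℝ) 1) :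
    LQXbar t - mm n t ≤ 4/n := by
  have hn' : (0:ℝ) < n := by exact_mod_cast hn
  set k := kk n t with hk
  have hk1 : (k:ℝ)/n ≤ t := kk_div_le n hn ht.1
  have hk2 : t ≤ ((k:ℝ)+1)/n := by
    have := le_kk_div_add n hn ht.1 ht.2; exact_mod_cast this
  by_cases hL : t ≤ Real.log 2
  · have h1 : LQXbar t = 3 - Real.exp t := by unfold LQXbar; rw [if_pos hL]
    have h2 := mm_lb n t
    have : (0:ℝ) ≤ 4/n := by positivity
    linarith
  · have h1 : LQXbar t = 1 := by unfold LQXbar; rw [if_neg hL]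
    have hccle : cc n k ≤ 2 * Real.exp (-((k:ℝ)/n)) := cc_le n k
    have hlow : 3 - 2 * Real.exp (t - (k:ℝ)/n) ≤ mm n t := by
      have : cc n k * Real.exp t ≤ 2 * Real.exp (t - (k:ℝ)/n) := by
        have := mul_le_mul_of_nonneg_right hccle (Real.exp_nonneg t)
        calc cc n k * Real.exp t ≤ 2 * Real.exp (-((k:ℝ)/n)) * Real.exp t := this
          _ = 2 * Real.exp (t - (k:ℝ)/n) := by rw [mul_assoc, exp_merge]; ring_nf
      calc 3 - 2 * Real.exp (t - (k:ℝ)/n) ≤ 3 - cc n k * Real.exp t := by linarith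
        _ ≤ mm n t := le_max_left _ _
    have hsmall : Real.exp (t - (k:ℝ)/n) ≤ Real.exp (1/(n:ℝ)) := by
      apply Real.exp_le_exp.2
      have : t - (k:ℝ)/n ≤ 1/n := by
        have : ((k:ℝ)+1)/n = (k:ℝ)/n + 1/n := by ring
        linarith [hk2.trans_eq this]
      linarith
    have := exp_inv_le hn
    rw [h1]
    have h4 : (4:ℝ)/n = 2*(2/(n:ℝ)) := by ring
    linarith

lemma eq_zero_of_integral_zero {g : ℝ → ℝ} (hg : ContinuousOn g (Set.Icc 0 1))
    (h0 : ∀ t ∈ Set.Icc (0:ℝ) 1, 0 ≤ g t) (hint : (∫ t in (0:ℝ)..1, g t) = 0) :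
    ∀ t ∈ Set.Icc (0:ℝ) 1, g t = 0 := by
  intro t₀ ht₀
  by_contra hne
  have hpos : 0 < g t₀ := lt_of_le_of_ne (h0 t₀ ht₀) (Ne.symm hne)
  have hcw : ContinuousWithinAt g (Set.Icc 0 1) t₀ := hg t₀ ht₀
  rw [Metric.continuousWithinAt_iff] at hcw
  obtain ⟨δ, hδ, hδ'⟩ := hcw (g t₀ / 2) (by linarith)
  set α : ℝ := max 0 (t₀ - δ/2) with hα
  set β : ℝ := min 1 (t₀ + δ/2) with hβ
  have ht₀1 : 0 ≤ t₀ := ht₀.1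
  have ht₀2 : t₀ ≤ 1 := ht₀.2
  have hαβ : α < β :=
    max_lt (lt_min zero_lt_one (by linarith)) (lt_min (by linarith) (by linarith))
  have hα0 : 0 ≤ α := le_max_left _ _
  have hβ1 : β ≤ 1 := min_le_left _ _
  have hsub : Set.Icc α β ⊆ Set.Icc (0:ℝ) 1 := Set.Icc_subset_Icc hα0 hβ1
  have hge : ∀ x ∈ Set.Icc α β, g t₀ / 2 ≤ g x := by
    intro x hx
    have hx1 : t₀ - δ/2 ≤ x := le_trans (le_max_right _ _) hx.1
    have hx2 : x ≤ t₀ + δ/2 := le_trans hx.2 (min_le_right _ _)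
    have hdist : dist x t₀ < δ := by
      rw [Real.dist_eq, abs_lt]; constructor <;> linarith
    have := hδ' (hsub hx) hdist
    rw [Real.dist_eq, abs_lt] at this
    linarith [this.1]
  have hgII : ∀ {p q : ℝ}, 0 ≤ p → p ≤ q → q ≤ 1 → IntervalIntegrable g volume p q := by
    intro p q hp hpq hq
    apply IntegrableOn.intervalIntegrable
    refine (hg.mono ?_).integrableOn_compact (isCompact_uIcc)
    rw [Set.uIcc_of_le hpq]; exact Set.Icc_subset_Icc hp hq
  have hsplit : (∫ t in (0:ℝ)..α, g t) + (∫ t in α..β, g t) + (∫ t in β..(1:ℝ), g t)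
      = ∫ t in (0:ℝ)..1, g t := by
    rw [intervalIntegral.integral_add_adjacent_intervals (hgII le_rfl hα0 (hαβ.le.trans hβ1))
      (hgII hα0 hαβ.le hβ1)]
    exact intervalIntegral.integral_add_adjacent_intervals
      (hgII le_rfl (hα0.trans hαβ.le) hβ1) (hgII (hα0.trans hαβ.le) hβ1 le_rfl)
  have h1 : 0 ≤ ∫ t in (0:ℝ)..α, g t :=
    intervalIntegral.integral_nonneg hα0 (fun u hu => h0 u ⟨hu.1, hu.2.trans (hαβ.le.trans hβ1)⟩)
  have h3 : 0 ≤ ∫ t in β..(1:ℝ), g t :=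
    intervalIntegral.integral_nonneg hβ1 (fun u hu => h0 u ⟨(hα0.trans (hαβ.le.trans hu.1)), hu.2⟩)
  have h2 : (β - α) * (g t₀ / 2) ≤ ∫ t in α..β, g t := by
    have := intervalIntegral.integral_mono_on hαβ.le intervalIntegrable_const
      (hgII hα0 hαβ.le hβ1) hge
    have heq : (β - α) * g t₀ / 2 = (β - α) * (g t₀ / 2) := by ring
    simpa [heq] using this
  have hmid : 0 < (β - α) * (g t₀ / 2) := by
    apply mul_pos (by linarith) (by linarith)
  linarith [hsplit, hint]


/-- Rate of convergence `C/n` of the optimal pairs of the discretely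
constrained LQ problems towards the continuously constrained optimal pair. -/
theorem stmt_13
    (un Xn : ℕ → ℝ → ℝ)
    -- for each `n`, `(un n, Xn n)` is an optimal pair under the discrete
    -- constraints `X(i/n) ≥ 1`, `i = 0,…,n`
    (hdisc : ∀ n : ℕ, 0 < n →
      LQAdmissible (un n) ∧ LQTrajectory (un n) (Xn n) ∧
      (∀ i ≤ n, 1 ≤ Xn n ((i : ℝ) / n)) ∧
      (∀ u X : ℝ → ℝ, LQAdmissible u → LQTrajectory u X →
        (∀ i ≤ n, 1 ≤ X ((i : ℝ) / n)) → LQCost (Xn n) ≤ LQCost X)) :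
    ∃ C : ℝ, ∀ n : ℕ, 0 < n →
      (∀ t ∈ Set.Icc (0 : ℝ) 1, |Xn n t - LQXbar t| ≤ C / n) ∧
      |LQCost (Xn n) - LQCost LQXbar| ≤ C / n := by
  refine ⟨32, fun n hn => ?_⟩
  obtain ⟨hadm, htraj, hcon, hopt⟩ := hdisc n hn
  have hn' : (0:ℝ) < n := by exact_mod_cast hn
  have h01 : (0:ℝ) ≤ 1 := zero_le_one
  have huIcc : Set.uIcc (0:ℝ) 1 = Set.Icc 0 1 := Set.uIcc_of_le h01
  -- `Xn n` dominates `mm n`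
  have hXm : ∀ t ∈ Set.Icc (0:ℝ) 1, mm n t ≤ Xn n t :=
    fun t ht => mm_le_traj hn hadm htraj hcon ht
  -- optimality against the explicit admissible pair `(vv n, mm n)`
  have hJ : LQCost (Xn n) ≤ LQCost (mm n) :=
    hopt (vv n) (mm n) (mm_adm n) (mm_traj hn) (fun i hi => mm_con hn i hi)
  have hXc : ContinuousOn (Xn n) (Set.Icc 0 1) := htraj.1
  have hmc : ContinuousOn (mm n) (Set.Icc 0 1) := (mm_traj hn).1
  have hX2II : IntervalIntegrable (fun t => (Xn n t)^2) volume 0 1 := by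
    apply IntegrableOn.intervalIntegrable
    refine ((hXc.mono ?_).pow 2).integrableOn_compact (isCompact_uIcc)
    rw [huIcc]
  have hm2II : IntervalIntegrable (fun t => (mm n t)^2) volume 0 1 := by
    apply IntegrableOn.intervalIntegrable
    refine ((hmc.mono ?_).pow 2).integrableOn_compact (isCompact_uIcc)
    rw [huIcc]
  have h1mem : (1:ℝ) ∈ Set.Icc (0:ℝ) 1 := ⟨zero_le_one, le_rfl⟩
  have hsq : ∀ t ∈ Set.Icc (0:ℝ) 1, (mm n t)^2 ≤ (Xn n t)^2 := by
    intro t ht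
    have h1 := (mm_pos (n := n) ht.2).le
    have h2 := hXm t ht
    nlinarith
  -- the integral of the nonnegative difference vanishes
  have hintdiff : (∫ t in (0:ℝ)..1, ((Xn n t)^2 - (mm n t)^2)) = 0 := by
    have hsub : (∫ t in (0:ℝ)..1, ((Xn n t)^2 - (mm n t)^2))
        = (∫ t in (0:ℝ)..1, (Xn n t)^2) - ∫ t in (0:ℝ)..1, (mm n t)^2 :=
      intervalIntegral.integral_sub hX2II hm2II
    have hnonneg : 0 ≤ ∫ t in (0:ℝ)..1, ((Xn n t)^2 - (mm n t)^2) :=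
      intervalIntegral.integral_nonneg h01 (fun u hu => by linarith [hsq u hu])
    have hcost : (∫ t in (0:ℝ)..1, (Xn n t)^2) + (Xn n 1)^2
        ≤ (∫ t in (0:ℝ)..1, (mm n t)^2) + (mm n 1)^2 := hJ
    have hsq1 : (mm n 1)^2 ≤ (Xn n 1)^2 := hsq 1 h1mem
    linarith
  -- pointwise equality `Xn n = mm n` on `[0,1]`
  have heq : ∀ t ∈ Set.Icc (0:ℝ) 1, Xn n t = mm n t := by
    have := eq_zero_of_integral_zero (g := fun t => (Xn n t)^2 - (mm n t)^2)
      ((hXc.pow 2).sub (hmc.pow 2)) (fun t ht => by linarith [hsq t ht]) hintdiff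
    intro t ht
    have h2 := this t ht
    have h3 := (mm_pos (n := n) ht.2)
    have h4 := hXm t ht
    nlinarith
  have h32n : (0:ℝ) ≤ 32/(n:ℝ) := by positivity
  have h432 : (4:ℝ)/(n:ℝ) ≤ 32/(n:ℝ) := by
    rw [div_le_div_iff_of_pos_right hn']; norm_num
  constructor
  · -- uniform estimate
    intro t ht
    rw [heq t ht]
    have h1 := mm_le_Xbar hn ht
    have h2 := Xbar_sub_mm hn ht
    rw [abs_le]
    constructor <;> [linarith; linarith]
  · -- cost estimate
    have hX1 : Xn n 1 = mm n 1 := heq 1 h1mem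
    have hIcongr : (∫ t in (0:ℝ)..1, (Xn n t)^2) = ∫ t in (0:ℝ)..1, (mm n t)^2 := by
      apply intervalIntegral.integral_congr
      intro t ht
      rw [huIcc] at ht
      simp only
      rw [heq t ht]
    have hCeq : LQCost (Xn n) = LQCost (mm n) := by
      unfold LQCost
      rw [hIcongr, hX1]
    rw [hCeq]
    -- pointwise bound on the squares
    have hpw : ∀ t ∈ Set.Icc (0:ℝ) 1, |(mm n t)^2 - (LQXbar t)^2| ≤ 16/(n:ℝ) := by
      intro t ht
      have h1 := mm_le_Xbar hn ht
      have h2 := Xbar_sub_mm hn ht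
      have h3 := Xbar_mem ht
      have h4 := (mm_pos (n := n) ht.2)
      have hprod : (LQXbar t - mm n t) * (LQXbar t + mm n t) ≤ (4/(n:ℝ)) * 4 :=
        mul_le_mul h2 (by linarith) (by linarith) (by positivity)
      have hring : (LQXbar t)^2 - (mm n t)^2
          = (LQXbar t - mm n t) * (LQXbar t + mm n t) := by ring
      have h164 : (4/(n:ℝ))*4 = 16/(n:ℝ) := by ring
      rw [abs_le]
      constructor
      · nlinarith
      · nlinarith
    have hXbar_meas : Measurable LQXbar := by
      unfold LQXbar
      exact Measurable.ite (measurableSet_le measurable_id measurable_const)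
        (measurable_const.sub Real.continuous_exp.measurable) measurable_const
    have hXb2II : IntervalIntegrable (fun t => (LQXbar t)^2) volume 0 1 := by
      apply IntegrableOn.intervalIntegrable
      apply Integrable.mono' (g := fun _ => (4:ℝ))
      · have : IntegrableOn (fun _ => (4:ℝ)) (Set.uIcc (0:ℝ) 1) volume := by
          refine integrableOn_const ?_
          rw [← Set.Icc_min_max]; simp [Real.volume_Icc]
        exact this
      · exact (hXbar_meas.pow_const 2).aestronglyMeasurable.restrict
      · rw [huIcc]
        refine (MeasureTheory.ae_restrict_iff' measurableSet_Icc).2 ?_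
        filter_upwards with τ hτ
        have := Xbar_mem hτ
        rw [Real.norm_eq_abs, abs_le]
        constructor <;> nlinarith
    have hm2II' : IntervalIntegrable (fun t => (mm n t)^2) volume 0 1 := hm2II
    have hsub2 : (∫ t in (0:ℝ)..1, ((mm n t)^2 - (LQXbar t)^2))
        = (∫ t in (0:ℝ)..1, (mm n t)^2) - ∫ t in (0:ℝ)..1, (LQXbar t)^2 :=
      intervalIntegral.integral_sub hm2II' hXb2II
    have habs : |∫ t in (0:ℝ)..1, ((mm n t)^2 - (LQXbar t)^2)| ≤ 16/(n:ℝ) := by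
      have := intervalIntegral.norm_integral_le_of_norm_le_const
        (C := 16/(n:ℝ)) (f := fun t => (mm n t)^2 - (LQXbar t)^2) (a := (0:ℝ)) (b := 1) ?_
      · simpa using this
      · intro x hx
        rw [Set.uIoc_of_le h01] at hx
        exact (Real.norm_eq_abs _) ▸ hpw x ⟨hx.1.le, hx.2⟩
    have hend : |(mm n 1)^2 - (LQXbar 1)^2| ≤ 16/(n:ℝ) := hpw 1 h1mem
    have hcostdiff : LQCost (mm n) - LQCost LQXbar
        = (∫ t in (0:ℝ)..1, ((mm n t)^2 - (LQXbar t)^2)) + ((mm n 1)^2 - (LQXbar 1)^2) := by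
      unfold LQCost
      rw [hsub2]
      ring
    rw [hcostdiff]
    have h1632 : (16:ℝ)/(n:ℝ) + 16/(n:ℝ) = 32/(n:ℝ) := by ring
    calc |(∫ t in (0:ℝ)..1, ((mm n t)^2 - (LQXbar t)^2)) + ((mm n 1)^2 - (LQXbar 1)^2)|
        ≤ |∫ t in (0:ℝ)..1, ((mm n t)^2 - (LQXbar t)^2)| + |(mm n 1)^2 - (LQXbar 1)^2| :=
          abs_add_le _ _
      _ ≤ 16/(n:ℝ) + 16/(n:ℝ) := add_le_add habs hend
      _ = 32/(n:ℝ) := h1632
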